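/- For ε₁, ε₂ ∈ (0,1), P(T) of Proposition 1 satisfies the bound P(T) ≤ ε₁(1-ε₂)² · T · (max(ε₁ε₂, ε₁ε₂(1-ε₁)(1-ε₂), 1-ε₁))^{⌈(T-1)/2⌉} · C for some constant C depending only on ε₁, ε₂; in particular P(T) → 0 as T → ∞. -/

import Mathlib

open Filter

/-- Inner sum over nonnegative integers `t₂, t₃` with `2*t₂ + t₃ = n`
of `a^t₂ * b^t₃`. -/
noncomputable def innerSum (a b : ℝ) (n : ℕ) : ℝ :=
  ∑ t₂ ∈ Finset.range (n + 1), ∑ t₃ ∈ Finset.range (n + 1),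
    if 2 * t₂ + t₃ = n then a ^ t₂ * b ^ t₃ else 0

/-- The chain-duration probability `P(T)` of Proposition 1. -/
noncomputable def chainP (ε₁ ε₂ : ℝ) (T : ℕ) : ℝ :=
  ε₁ * (1 - ε₂) ^ 2 *
    ∑ t₁ ∈ Finset.range T,
      (ε₁ * ε₂) ^ t₁ *
        innerSum (ε₁ * ε₂ * (1 - ε₁) * (1 - ε₂)) (1 - ε₁) (T - 1 - t₁)

lemma innerSum_nonneg {a b : ℝ} (ha : 0 ≤ a) (hb : 0 ≤ b) (n : ℕ) :
    0 ≤ innerSum a b n := by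
  unfold innerSum
  apply Finset.sum_nonneg; intro t₂ _
  apply Finset.sum_nonneg; intro t₃ _
  split_ifs <;> positivity

lemma innerSum_le {a b q : ℝ} (ha : 0 ≤ a) (hb : 0 ≤ b) (hq : 0 ≤ q)
    (haq : a ≤ q ^ 2) (hbq : b ≤ q) (n : ℕ) :
    innerSum a b n ≤ (n + 1 : ℝ) * q ^ n := by
  unfold innerSum
  have h1 : ∀ t₂ ∈ Finset.range (n + 1),
      (∑ t₃ ∈ Finset.range (n + 1), if 2 * t₂ + t₃ = n then a ^ t₂ * b ^ t₃ else 0)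
        ≤ q ^ n := by
    intro t₂ _
    calc (∑ t₃ ∈ Finset.range (n + 1), if 2 * t₂ + t₃ = n then a ^ t₂ * b ^ t₃ else 0)
        ≤ ∑ t₃ ∈ Finset.range (n + 1), if t₃ = n - 2 * t₂ then q ^ n else 0 := by
          apply Finset.sum_le_sum
          intro t₃ _
          by_cases h : 2 * t₂ + t₃ = n
          · rw [if_pos h, if_pos (by omega)]
            calc a ^ t₂ * b ^ t₃ ≤ (q ^ 2) ^ t₂ * q ^ t₃ := by
                  apply mul_le_mul (pow_le_pow_left₀ ha haq _)
                    (pow_le_pow_left₀ hb hbq _) (by positivity) (by positivity)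
              _ = q ^ (2 * t₂ + t₃) := by rw [← pow_mul, ← pow_add]
              _ = q ^ n := by rw [h]
          · rw [if_neg h]
            split_ifs <;> positivity
      _ ≤ q ^ n := by
          rw [Finset.sum_ite_eq' (Finset.range (n + 1)) (n - 2 * t₂) (fun _ => q ^ n)]
          split_ifs <;> [exact le_refl _; positivity]
  calc (∑ t₂ ∈ Finset.range (n + 1), ∑ t₃ ∈ Finset.range (n + 1),
        if 2 * t₂ + t₃ = n then a ^ t₂ * b ^ t₃ else 0)
      ≤ (Finset.range (n + 1)).card • q ^ n := Finset.sum_le_card_nsmul _ _ _ h1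
    _ = (n + 1 : ℝ) * q ^ n := by
        rw [Finset.card_range, nsmul_eq_mul]; push_cast; ring

theorem chainP_decay (ε₁ ε₂ : ℝ)
    (h₁ : ε₁ ∈ Set.Ioo (0:ℝ) 1) (h₂ : ε₂ ∈ Set.Ioo (0:ℝ) 1) :
    (∃ C > 0, ∀ T : ℕ, 1 ≤ T →
      chainP ε₁ ε₂ T ≤
        ε₁ * (1 - ε₂) ^ 2 * T *
          (max (ε₁ * ε₂)
            (max (ε₁ * ε₂ * (1 - ε₁) * (1 - ε₂)) (1 - ε₁))) ^ (T / 2) * C) ∧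
    Tendsto (chainP ε₁ ε₂) atTop (nhds 0) := by
  obtain ⟨he1, he1'⟩ := h₁
  obtain ⟨he2, he2'⟩ := h₂
  have hb0 : (0:ℝ) < 1 - ε₁ := by linarith
  have h2' : (0:ℝ) < 1 - ε₂ := by linarith
  have hc0 : 0 < ε₁ * ε₂ := mul_pos he1 he2
  have ha0 : 0 < ε₁ * ε₂ * (1 - ε₁) * (1 - ε₂) := by positivity
  have hc1 : ε₁ * ε₂ < 1 := by nlinarith
  have hb1 : 1 - ε₁ < 1 := by linarith
  have ha1 : ε₁ * ε₂ * (1 - ε₁) * (1 - ε₂) < 1 := by nlinarith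
  have haeq : ε₁ * ε₂ * (1 - ε₁) * (1 - ε₂) ≤ (ε₁ * ε₂) * (1 - ε₁) := by nlinarith
  set c := ε₁ * ε₂ with hcdef
  set a := ε₁ * ε₂ * (1 - ε₁) * (1 - ε₂) with hadef
  set b := 1 - ε₁ with hbdef
  set q := max c (max a b) with hqdef
  have hq0 : 0 < q := lt_of_lt_of_le hc0 (le_max_left _ _)
  have hq1 : q < 1 := max_lt hc1 (max_lt ha1 hb1)
  have hcq : c ≤ q := le_max_left _ _
  have hbq : b ≤ q := le_trans (le_max_right a b) (le_max_right _ _)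
  have h1mq : (0:ℝ) < 1 - q := by linarith
  have haq2 : a ≤ q ^ 2 := by
    calc a ≤ c * b := haeq
      _ ≤ q * q := mul_le_mul hcq hbq hb0.le hq0.le
      _ = q ^ 2 := (sq q).symm
  -- key pointwise bound
  have key : ∀ T : ℕ, chainP ε₁ ε₂ T ≤ ε₁ * (1 - ε₂) ^ 2 * ((T : ℝ) ^ 2 * q ^ (T - 1)) := by
    intro T
    unfold chainP
    apply mul_le_mul_of_nonneg_left _ (by positivity)
    calc ∑ t₁ ∈ Finset.range T, c ^ t₁ * innerSum a b (T - 1 - t₁)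
        ≤ ∑ t₁ ∈ Finset.range T, (T : ℝ) * q ^ (T - 1) := by
          apply Finset.sum_le_sum
          intro t₁ ht₁
          rw [Finset.mem_range] at ht₁
          calc c ^ t₁ * innerSum a b (T - 1 - t₁)
              ≤ q ^ t₁ * (((T - 1 - t₁ : ℕ) + 1 : ℝ) * q ^ (T - 1 - t₁)) := by
                apply mul_le_mul (pow_le_pow_left₀ hc0.le hcq _)
                  (innerSum_le ha0.le hb0.le hq0.le haq2 hbq _)
                  (innerSum_nonneg ha0.le hb0.le _) (by positivity)
            _ = ((T - 1 - t₁ : ℕ) + 1 : ℝ) * q ^ (t₁ + (T - 1 - t₁)) := by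
                rw [pow_add]; ring
            _ ≤ (T : ℝ) * q ^ (T - 1) := by
                rw [show t₁ + (T - 1 - t₁) = T - 1 by omega]
                apply mul_le_mul_of_nonneg_right _ (by positivity)
                have h5 : (T - 1 - t₁) + 1 ≤ T := by omega
                exact_mod_cast h5
      _ = (T : ℝ) ^ 2 * q ^ (T - 1) := by
          rw [Finset.sum_const, Finset.card_range, nsmul_eq_mul]; ring
  -- geometric sum bound
  have geom : ∀ m : ℕ, ∑ i ∈ Finset.range m, q ^ i ≤ 1 / (1 - q) := by
    intro m
    rw [le_div_iff₀ h1mq]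
    have h := geom_sum_mul q m
    nlinarith [pow_nonneg hq0.le m]
  have hmq : ∀ m : ℕ, (m : ℝ) * q ^ m ≤ q / (1 - q) := by
    intro m
    calc (m : ℝ) * q ^ m = ∑ _i ∈ Finset.range m, q ^ m := by
          rw [Finset.sum_const, Finset.card_range, nsmul_eq_mul]
      _ ≤ ∑ i ∈ Finset.range m, q ^ (i + 1) := by
          apply Finset.sum_le_sum
          intro i hi
          rw [Finset.mem_range] at hi
          exact pow_le_pow_of_le_one hq0.le hq1.le (by omega)
      _ = q * ∑ i ∈ Finset.range m, q ^ i := by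
          simp only [pow_succ]
          rw [← Finset.sum_mul]; ring
      _ ≤ q * (1 / (1 - q)) := mul_le_mul_of_nonneg_left (geom m) hq0.le
      _ = q / (1 - q) := by ring
  have hTclaim : ∀ T : ℕ, (T : ℝ) * q ^ ((T - 1) / 2) ≤ 2 / (1 - q) := by
    intro T
    set m := (T - 1) / 2 with hm
    have hT : T ≤ 2 * m + 2 := by omega
    calc (T : ℝ) * q ^ m ≤ ((2 * m + 2 : ℕ) : ℝ) * q ^ m := by
          apply mul_le_mul_of_nonneg_right _ (by positivity)
          exact_mod_cast hT
      _ = 2 * ((m : ℝ) * q ^ m) + 2 * q ^ m := by push_cast; ring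
      _ ≤ 2 * (q / (1 - q)) + 2 * 1 := by
          have ha' := hmq m
          have hb' : q ^ m ≤ 1 := pow_le_one₀ hq0.le hq1.le
          nlinarith
      _ = 2 / (1 - q) := by
          field_simp
          ring
  constructor
  · refine ⟨2 / (1 - q), div_pos two_pos h1mq, fun T hT => ?_⟩
    calc chainP ε₁ ε₂ T ≤ ε₁ * (1 - ε₂) ^ 2 * ((T : ℝ) ^ 2 * q ^ (T - 1)) := key T
      _ = ε₁ * (1 - ε₂) ^ 2 * (T : ℝ) * q ^ (T / 2) * ((T : ℝ) * q ^ ((T - 1) / 2)) := by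
          have hsplit : q ^ (T - 1) = q ^ (T / 2) * q ^ ((T - 1) / 2) := by
            rw [← pow_add]; congr 1; omega
          rw [hsplit]; ring
      _ ≤ ε₁ * (1 - ε₂) ^ 2 * (T : ℝ) * q ^ (T / 2) * (2 / (1 - q)) := by
          apply mul_le_mul_of_nonneg_left (hTclaim T) (by positivity)
  · have hP0 : ∀ T, 0 ≤ chainP ε₁ ε₂ T := by
      intro T; unfold chainP
      apply mul_nonneg (by positivity)
      apply Finset.sum_nonneg
      intro t₁ _
      exact mul_nonneg (by positivity) (innerSum_nonneg ha0.le hb0.le _)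
    have hsum : Summable (fun T : ℕ => (T : ℝ) ^ 2 * q ^ T) :=
      summable_pow_mul_geometric_of_norm_lt_one 2
        (by rw [Real.norm_eq_abs, abs_of_pos hq0]; exact hq1)
    have h0 : Tendsto (fun T : ℕ => (T : ℝ) ^ 2 * q ^ T) atTop (nhds 0) :=
      hsum.tendsto_atTop_zero
    have h1 : Tendsto (fun T : ℕ => ε₁ * (1 - ε₂) ^ 2 / q * ((T : ℝ) ^ 2 * q ^ T))
        atTop (nhds 0) := by
      simpa using h0.const_mul (ε₁ * (1 - ε₂) ^ 2 / q)
    apply squeeze_zero hP0 _ h1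
    intro T
    calc chainP ε₁ ε₂ T ≤ ε₁ * (1 - ε₂) ^ 2 * ((T : ℝ) ^ 2 * q ^ (T - 1)) := key T
      _ = ε₁ * (1 - ε₂) ^ 2 / q * ((T : ℝ) ^ 2 * q ^ T) := by
          rcases Nat.eq_zero_or_pos T with h | h
          · subst h; simp
          · have hqT : q ^ T = q ^ (T - 1) * q := by
              rw [← pow_succ]; congr 1; omega
            rw [hqT]
            field_simp
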